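/- Semifield code construction: let S be a finite semifield of order q^m containing F_q in its center, identified additively with F_{q^m}, with F_q-bilinear multiplication ∘ and no zero divisors. Define C_S = {(x, (y − x∘a)_{a∈S}) : (x,y) ∈ S²} ⊆ F_{q^m}^{q^m+1}. Then C_S is an F_q-linear code of cardinality q^{2m}, and for every subspace V ≤ F_q^{q^m+1}, the cardinality of π_V(C_S) is 1, q^m, or q^{2m}; hence C_S is almost affine. -/

import Mathlib

open Submodule Module

variable (K L : Type) [Field K] [Fintype K] [Field L] [Fintype L] [Algebra K L]

/-- Orthogonal complement w.r.t. the standard dot product on `ι → K`. -/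
def stdPerp {ι : Type} [Fintype ι] (V : Submodule K (ι → K)) : Submodule K (ι → K) where
  carrier := {w | ∀ v ∈ V, ∑ j, v j * w j = 0}
  zero_mem' := by intro v hv; simp
  add_mem' := by
    intro a b ha hb v hv
    simp [Pi.add_apply, mul_add, Finset.sum_add_distrib, ha v hv, hb v hv]
  smul_mem' := by
    intro c a ha v hv
    simp only [Pi.smul_apply, smul_eq_mul, mul_left_comm]
    rw [← Finset.mul_sum, ha v hv, mul_zero]

/-- Extension of scalars: the `L`-span of a `K`-subspace of `ι → K` inside `ι → L`. -/
def extScalars {ι : Type} (W : Submodule K (ι → K)) : Submodule L (ι → L) :=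
  Submodule.span L ((fun (w : ι → K) (j : ι) => algebraMap K L (w j)) '' (W : Set (ι → K)))

/-- Image of the code `C` under the canonical projection `π_V`. -/
def projImage {ι : Type} [Fintype ι] (C : Set (ι → L)) (V : Submodule K (ι → K)) :
    Set ((ι → L) ⧸ extScalars K L (stdPerp K V)) :=
  Submodule.Quotient.mk '' C

/-- The rank function induced by a code: `ρ_C(V) = log_{q^m} |π_V(C)|`. -/
noncomputable def rho {ι : Type} [Fintype ι] (C : Set (ι → L)) (V : Submodule K (ι → K)) : ℕ :=
  Nat.log (Fintype.card L) (Nat.card (projImage K L C V))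

/-- `C` is an almost affine rank-metric code. -/
def AlmostAffine {ι : Type} [Fintype ι] (C : Set (ι → L)) : Prop :=
  ∀ V : Submodule K (ι → K), ∃ e : ℕ, Nat.card (projImage K L C V) = (Fintype.card L) ^ e

/-- Support of a vector `v ∈ L^ι` w.r.t. a `K`-basis `B` of `L`. -/
def supp {ι : Type} {m : ℕ} (B : Basis (Fin m) K L) (v : ι → L) : Submodule K (ι → K) :=
  Submodule.span K (Set.range fun i : Fin m => fun j : ι => B.repr (v j) i)

/-- The subcode `C(Z,x) = {c ∈ C : π_Z(c) = π_Z(x)}`. -/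
def subcode {ι : Type} [Fintype ι] (C : Set (ι → L)) (Z : Submodule K (ι → K)) (x : ι → L) :
    Set (ι → L) :=
  {c ∈ C | (Submodule.Quotient.mk (p := extScalars K L (stdPerp K Z)) c) =
      Submodule.Quotient.mk x}

/-- The `q`-matroid rank axioms (R1)–(R3). -/
def IsQMatroidRank {E : Type} [AddCommGroup E] [Module K E] (r : Submodule K E → ℕ) : Prop :=
  (∀ V : Submodule K E, r V ≤ finrank K V) ∧
  (∀ V W : Submodule K E, V ≤ W → r V ≤ r W) ∧
  (∀ V W : Submodule K E, r (V ⊔ W) + r (V ⊓ W) ≤ r V + r W)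

set_option linter.unusedSectionVars false in
lemma mem_extScalars_stdPerp_iff {ι : Type} [Fintype ι] (V : Submodule K (ι → K)) (c : ι → L) :
    c ∈ extScalars K L (stdPerp K V) ↔ ∀ v ∈ V, ∑ j, algebraMap K L (v j) * c j = 0 := by
  constructor
  · intro hc
    refine Submodule.span_induction ?_ ?_ ?_ ?_ hc
    · rintro _ ⟨w, hw, rfl⟩ v hv
      have h0 : ∑ j, v j * w j = 0 := hw v hv
      calc ∑ j, algebraMap K L (v j) * algebraMap K L (w j)
          = algebraMap K L (∑ j, v j * w j) := by rw [map_sum]; simp [map_mul]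
        _ = 0 := by rw [h0, map_zero]
    · intro v hv; simp
    · intro a b _ _ ha hb v hv
      simp [Pi.add_apply, mul_add, Finset.sum_add_distrib, ha v hv, hb v hv]
    · intro l a _ ha v hv
      simp only [Pi.smul_apply, smul_eq_mul, mul_left_comm]
      rw [← Finset.mul_sum, ha v hv, mul_zero]
  · intro h
    let B := Module.finBasis K L
    have key : ∀ i, (fun j => B.repr (c j) i) ∈ stdPerp K V := by
      intro i v hv
      have h0 := h v hv
      have expand : ∑ i', (∑ j, v j * B.repr (c j) i') • B i' = 0 := by
        calc ∑ i', (∑ j, v j * B.repr (c j) i') • B i'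
            = ∑ i', ∑ j, (v j * B.repr (c j) i') • B i' := by
              simp [Finset.sum_smul]
          _ = ∑ j, ∑ i', (v j * B.repr (c j) i') • B i' := Finset.sum_comm
          _ = ∑ j, v j • ∑ i', B.repr (c j) i' • B i' := by
              simp only [Finset.smul_sum, mul_smul]
          _ = ∑ j, v j • c j := by
              congr 1; funext j; congr 1; exact B.sum_repr (c j)
          _ = ∑ j, algebraMap K L (v j) * c j := by
              simp [Algebra.smul_def]
          _ = 0 := h0
      have h3 := B.repr_sum_self (fun i' => ∑ j, v j * B.repr (c j) i')
      rw [expand] at h3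
      have h4 := congrFun h3 i
      simpa using h4.symm
    have hc : c = ∑ i, B i • (fun j => algebraMap K L (B.repr (c j) i)) := by
      funext j
      simp only [Finset.sum_apply, Pi.smul_apply, smul_eq_mul]
      calc c j = ∑ i, B.repr (c j) i • B i := (B.sum_repr (c j)).symm
        _ = ∑ i, B i * algebraMap K L (B.repr (c j) i) := by
            simp [Algebra.smul_def, mul_comm]
    rw [hc]
    exact Submodule.sum_mem _ fun i _ =>
      Submodule.smul_mem _ _ (Submodule.subset_span ⟨_, key i, rfl⟩)

/-- semifield code construction. `L` (of order `q^m`) carries a `K`-bilinear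
semifield multiplication `mul` with identity and no zero divisors. The code
`C_S = {(x, (y − x∘a)_{a∈S}) : (x,y) ∈ S²} ⊆ F_{q^m}^{q^m+1}` (coordinates indexed by
`{∞} ∪ S`, i.e. `Option L`) is `F_q`-linear of cardinality `q^{2m}`, every projection
`π_V(C_S)` has cardinality `1`, `q^m` or `q^{2m}`, and hence `C_S` is almost affine. -/
theorem stmt_19 {K L : Type} [Field K] [Fintype K] [Field L] [Fintype L] [Algebra K L]
    (mul : L →ₗ[K] L →ₗ[K] L)
    (hzd : ∀ a b : L, mul a b = 0 → a = 0 ∨ b = 0)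
    (one : L) (hone : ∀ a : L, mul one a = a ∧ mul a one = a)
    (CS : Set (Option L → L))
    (hCS : CS = {f | ∃ x y : L,
        f = fun i => match i with
          | none => x
          | some a => y - mul x a}) :
    (∀ c₁ ∈ CS, ∀ c₂ ∈ CS, c₁ + c₂ ∈ CS) ∧
    (∀ r : K, ∀ c ∈ CS, r • c ∈ CS) ∧
    Nat.card CS = Fintype.card L ^ 2 ∧
    (∀ V : Submodule K (Option L → K),
      Nat.card (projImage K L CS V) = 1 ∨
      Nat.card (projImage K L CS V) = Fintype.card L ∨
      Nat.card (projImage K L CS V) = Fintype.card L ^ 2) ∧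
    AlmostAffine K L CS := by
  -- the code as a linear map
  let φ : (L × L) →ₗ[K] (Option L → L) :=
    { toFun := fun p i => match i with | none => p.1 | some a => p.2 - mul p.1 a
      map_add' := by
        intro p q; funext i
        cases i with
        | none => rfl
        | some a =>
          show (p.2 + q.2) - mul (p.1 + q.1) a = (p.2 - mul p.1 a) + (q.2 - mul q.1 a)
          rw [map_add, LinearMap.add_apply]; abel
      map_smul' := by
        intro r p; funext i
        cases i with
        | none => rfl
        | some a =>
          show r • p.2 - mul (r • p.1) a = r • (p.2 - mul p.1 a)
          rw [map_smul, LinearMap.smul_apply, smul_sub] }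
  have hφn : ∀ p : L × L, φ p none = p.1 := fun _ => rfl
  have hφs : ∀ (p : L × L) (a : L), φ p (some a) = p.2 - mul p.1 a := fun _ _ => rfl
  have hCSr : CS = Set.range φ := by
    rw [hCS]; ext f
    constructor
    · rintro ⟨x, y, rfl⟩; exact ⟨(x, y), rfl⟩
    · rintro ⟨⟨x, y⟩, rfl⟩; exact ⟨x, y, rfl⟩
  have hmulz : ∀ b : L, mul 0 b = 0 := by
    intro b; rw [map_zero]; rfl
  have hinj : Function.Injective φ := by
    intro p q h
    have h1 : p.1 = q.1 := congrFun h none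
    have h2 := congrFun h (some 0)
    have h2' : p.2 - mul p.1 0 = q.2 - mul q.1 0 := h2
    rw [map_zero, map_zero, sub_zero, sub_zero] at h2'
    exact Prod.ext h1 h2'
  have cardLL : Nat.card (L × L) = Fintype.card L ^ 2 := by
    simp [Nat.card_eq_fintype_card, Fintype.card_prod, sq]
  have hcardCS : Nat.card CS = Fintype.card L ^ 2 := by
    rw [hCSr, Nat.card_range_of_injective hinj, cardLL]
  have hzd' : ∀ x b : L, b ≠ 0 → mul x b = 0 → x = 0 := fun x b hb h =>
    (hzd x b h).resolve_right hb
  have hproj : ∀ V : Submodule K (Option L → K),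
      Nat.card (projImage K L CS V) = 1 ∨
      Nat.card (projImage K L CS V) = Fintype.card L ∨
      Nat.card (projImage K L CS V) = Fintype.card L ^ 2 := by
    intro V
    set W := extScalars K L (stdPerp K V) with hW
    let ψ : (L × L) →ₗ[K] ((Option L → L) ⧸ W) := (W.mkQ.restrictScalars K).comp φ
    have himg : projImage K L CS V = Set.range ψ := by
      unfold projImage
      rw [hCSr, ← Set.range_comp]
      rfl
    -- the dot product computation
    have hdot : ∀ (v : Option L → K) (x y : L),
        ∑ j, algebraMap K L (v j) * (φ (x, y)) j
          = (∑ a : L, v (some a)) • y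
            + mul x ((v none) • one - ∑ a : L, v (some a) • a) := by
      intro v x y
      have hR : mul x ((v none) • one - ∑ a : L, v (some a) • a)
          = (v none) • x - ∑ a : L, (v (some a)) • mul x a := by
        rw [map_sub, map_smul, (hone x).2, map_sum]
        simp [map_smul]
      rw [hR]
      calc ∑ j, algebraMap K L (v j) * (φ (x, y)) j
          = algebraMap K L (v none) * x
            + ∑ a : L, algebraMap K L (v (some a)) * (y - mul x a) := by
            rw [Fintype.sum_option]
            simp only [hφn, hφs]
        _ = (v none) • x + ∑ a : L, ((v (some a)) • y - (v (some a)) • mul x a) := by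
            simp [Algebra.smul_def, mul_sub]
        _ = (v none) • x + ((∑ a : L, v (some a)) • y - ∑ a : L, (v (some a)) • mul x a) := by
            rw [Finset.sum_sub_distrib, Finset.sum_smul]
        _ = (∑ a : L, v (some a)) • y + ((v none) • x - ∑ a : L, (v (some a)) • mul x a) := by
            abel
    have hker : ∀ x y : L, (x, y) ∈ LinearMap.ker ψ ↔
        ∀ v ∈ V, (∑ a : L, v (some a)) • y
          + mul x ((v none) • one - ∑ a : L, v (some a) • a) = 0 := by
      intro x y
      rw [LinearMap.mem_ker]
      have hq : ψ (x, y) = Submodule.Quotient.mk (p := W) (φ (x, y)) := rfl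
      rw [hq, Submodule.Quotient.mk_eq_zero, hW, mem_extScalars_stdPerp_iff]
      exact forall₂_congr fun v hv => by rw [hdot v x y]
    -- counting
    have hquot : Nat.card ((L × L) ⧸ LinearMap.ker ψ) = Nat.card (projImage K L CS V) := by
      rw [himg]
      exact Nat.card_congr ((LinearMap.quotKerEquivRange ψ).toEquiv.trans
        (Equiv.setCongr (LinearMap.coe_range ψ)))
    have hcount : Fintype.card L ^ 2
        = Nat.card (LinearMap.ker ψ) * Nat.card (projImage K L CS V) := by
      rw [← hquot, ← cardLL]
      exact Submodule.card_eq_card_quotient_mul_card _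
    have hLpos : 0 < Fintype.card L := Fintype.card_pos
    -- case analysis
    by_cases hAall : ∀ v ∈ V, (∑ a : L, v (some a)) = 0
    · by_cases hBall : ∀ v ∈ V, ((v none) • one - ∑ a : L, v (some a) • a) = 0
      · -- kernel is everything, projection has one element
        left
        have htop : LinearMap.ker ψ = ⊤ := by
          ext ⟨x, y⟩
          simp only [Submodule.mem_top, iff_true]
          rw [hker]
          intro v hv
          rw [hAall v hv, hBall v hv, map_zero, zero_smul, zero_add]
        have hkc : Nat.card (LinearMap.ker ψ) = Fintype.card L ^ 2 := by
          rw [htop, ← cardLL]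
          exact Nat.card_congr Submodule.topEquiv.toEquiv
        rw [hkc] at hcount
        have := hcount.symm
        nlinarith [hLpos, hcount]
      · -- kernel = {(0, y)}
        right; left
        push_neg at hBall
        obtain ⟨v₀, hv₀, hB0⟩ := hBall
        have hkEq : ∀ x y : L, (x, y) ∈ LinearMap.ker ψ ↔ x = 0 := by
          intro x y
          rw [hker]
          constructor
          · intro h
            have h0 := h v₀ hv₀
            rw [hAall v₀ hv₀, zero_smul, zero_add] at h0
            exact hzd' x _ hB0 h0
          · rintro rfl v hv
            rw [hAall v hv, zero_smul, zero_add, hmulz]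
        have hkc : Nat.card (LinearMap.ker ψ) = Fintype.card L := by
          rw [← Nat.card_eq_fintype_card]
          refine Nat.card_congr ⟨fun p => p.1.2, fun y => ⟨(0, y), (hkEq 0 y).mpr rfl⟩,
            fun p => ?_, fun y => rfl⟩
          apply Subtype.ext
          exact Prod.ext ((hkEq p.1.1 p.1.2).mp p.2).symm rfl
        rw [hkc, sq] at hcount
        exact (Nat.eq_of_mul_eq_mul_left hLpos hcount).symm
    · push_neg at hAall
      obtain ⟨v₀, hv₀, hA0⟩ := hAall
      set A0 : K := ∑ a : L, v₀ (some a) with hA0def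
      set B0 : L := (v₀ none) • one - ∑ a : L, v₀ (some a) • a with hB0def
      let g : L → L := fun x => -(A0⁻¹ • mul x B0)
      have hgy : ∀ x y : L, (x, y) ∈ LinearMap.ker ψ → y = g x := by
        intro x y h
        have h0 := (hker x y).mp h v₀ hv₀
        have h1 : A0 • y = -(mul x B0) := by
          rw [eq_neg_iff_add_eq_zero]; exact h0
        calc y = A0⁻¹ • (A0 • y) := by
              rw [smul_smul, inv_mul_cancel₀ hA0, one_smul]
          _ = A0⁻¹ • (-(mul x B0)) := by rw [h1]
          _ = g x := by rw [smul_neg]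
      have hcondEq : ∀ (v : Option L → K) (x : L),
          (∑ a : L, v (some a)) • g x
            + mul x ((v none) • one - ∑ a : L, v (some a) • a)
          = mul x (((v none) • one - ∑ a : L, v (some a) • a)
              - ((∑ a : L, v (some a)) * A0⁻¹) • B0) := by
        intro v x
        have : (∑ a : L, v (some a)) • g x
            = -(mul x (((∑ a : L, v (some a)) * A0⁻¹) • B0)) := by
          show (∑ a : L, v (some a)) • -(A0⁻¹ • mul x B0) = _
          rw [map_smul, smul_neg, smul_smul]
        conv_rhs => rw [map_sub]
        rw [this]
        exact neg_add_eq_sub _ _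
      by_cases hprop : ∀ v ∈ V, ((v none) • one - ∑ a : L, v (some a) • a)
          = ((∑ a : L, v (some a)) * A0⁻¹) • B0
      · -- kernel is the graph of g
        right; left
        have hkEq : ∀ x y : L, (x, y) ∈ LinearMap.ker ψ ↔ y = g x := by
          intro x y
          constructor
          · exact hgy x y
          · rintro rfl
            rw [hker]
            intro v hv
            rw [hcondEq v x, hprop v hv, sub_self, map_zero]
        have hkc : Nat.card (LinearMap.ker ψ) = Fintype.card L := by
          rw [← Nat.card_eq_fintype_card]
          refine Nat.card_congr ⟨fun p => p.1.1, fun x => ⟨(x, g x), (hkEq x (g x)).mpr rfl⟩,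
            fun p => ?_, fun x => rfl⟩
          apply Subtype.ext
          exact Prod.ext rfl ((hkEq p.1.1 p.1.2).mp p.2).symm
        rw [hkc, sq] at hcount
        exact (Nat.eq_of_mul_eq_mul_left hLpos hcount).symm
      · -- kernel is trivial
        right; right
        push_neg at hprop
        obtain ⟨v₁, hv₁, hne⟩ := hprop
        have hbot : LinearMap.ker ψ = ⊥ := by
          ext ⟨x, y⟩
          simp only [Submodule.mem_bot, Prod.mk_eq_zero]
          constructor
          · intro h
            have hx : x = 0 := by
              have h1 := (hker x y).mp h v₁ hv₁
              rw [hgy x y h, hcondEq v₁ x] at h1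
              exact hzd' x _ (sub_ne_zero.mpr hne) h1
            refine ⟨hx, ?_⟩
            have := hgy x y h
            rw [this, hx]
            show -(A0⁻¹ • mul 0 B0) = 0
            rw [hmulz, smul_zero, neg_zero]
          · rintro ⟨rfl, rfl⟩
            rw [hker]
            intro v hv
            rw [hmulz, add_zero, smul_zero]
        have hkc : Nat.card (LinearMap.ker ψ) = 1 := by
          rw [hbot]
          exact Nat.card_unique
        rw [hkc, one_mul] at hcount
        exact hcount.symm
  refine ⟨?_, ?_, hcardCS, hproj, fun V => ?_⟩
  · intro c₁ hc₁ c₂ hc₂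
    rw [hCSr] at *
    obtain ⟨p, rfl⟩ := hc₁
    obtain ⟨q, rfl⟩ := hc₂
    exact ⟨p + q, map_add φ p q⟩
  · intro r c hc
    rw [hCSr] at *
    obtain ⟨p, rfl⟩ := hc
    exact ⟨r • p, map_smul φ r p⟩
  · rcases hproj V with h | h | h
    · exact ⟨0, by rw [h, pow_zero]⟩
    · exact ⟨1, by rw [h, pow_one]⟩
    · exact ⟨2, h⟩
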